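/- If A, B, C are iid random variables with values in ℝ, then P(2A < B + C) ≤ 2/3. -/

import Mathlib

open MeasureTheory

/-- If A, B, C are iid real-valued random variables (modeled by the 3-fold
product of a probability measure `μ` on `ℝ`), then `P(2A < B + C) ≤ 2/3`. -/
theorem stmt5 (μ : Measure ℝ) [IsProbabilityMeasure μ] :
    (Measure.pi fun _ : Fin 3 => μ) {x | 2 * x 0 < x 1 + x 2} ≤ 2 / 3 := by
  set π := (Measure.pi fun _ : Fin 3 => μ) with hπ
  haveI : IsProbabilityMeasure π := by rw [hπ]; infer_instance
  -- the three events
  set S : Fin 3 → Set (Fin 3 → ℝ) := fun i => {x | 2 * x i < x (i+1) + x (i+2)} with hS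
  have hmeas : ∀ i, MeasurableSet (S i) := by
    intro i
    exact measurableSet_lt (by fun_prop) (by fun_prop)
  -- cyclic permutation
  let σ : Fin 3 ≃ Fin 3 := ⟨fun i => i + 1, fun i => i - 1, by intro i; simp, by intro i; simp⟩
  have hmp : MeasurePreserving (MeasurableEquiv.piCongrLeft (fun _ => ℝ) σ) π π :=
    measurePreserving_piCongrLeft (fun _ => μ) σ
  have hpre : ∀ i, (MeasurableEquiv.piCongrLeft (fun _ => ℝ) σ) ⁻¹' (S (i+1)) = S i := by
    intro i
    ext x
    simp only [Set.mem_preimage, hS, Set.mem_setOf_eq, MeasurableEquiv.coe_piCongrLeft,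
      Equiv.piCongrLeft_apply_eq_cast, cast_eq]
    have : ∀ j : Fin 3, σ (σ.symm j) = j := fun j => σ.apply_symm_apply j
    constructor <;> intro h <;> [skip; skip] <;>
      · convert h using 2 <;> simp only [σ, Equiv.coe_fn_symm_mk, Equiv.coe_fn_mk] <;> congr 1 <;> abel
  have heq : ∀ i, π (S i) = π (S (i+1)) := fun i => by
    rw [← hmp.measure_preimage (hmeas (i+1)).nullMeasurableSet, hpre i]
  have h01 : π (S 0) + π (S 1) = π (S 0 ∪ S 1) + π (S 0 ∩ S 1) :=
    (measure_union_add_inter _ (hmeas 1)).symm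
  have hsub : S 0 ∩ S 1 ⊆ (S 2)ᶜ := by
    rintro x ⟨h0, h1⟩ h2
    simp only [hS, Set.mem_setOf_eq] at h0 h1 h2
    have e1 : ((0:Fin 3)+1) = 1 := rfl
    have e2 : ((0:Fin 3)+2) = 2 := rfl
    have e3 : ((1:Fin 3)+1) = 2 := rfl
    have e4 : ((1:Fin 3)+2) = 0 := rfl
    have e5 : ((2:Fin 3)+1) = 0 := rfl
    have e6 : ((2:Fin 3)+2) = 1 := rfl
    rw [e1, e2] at h0; rw [e3, e4] at h1; rw [e5, e6] at h2
    linarith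
  have hcompl : π (S 0 ∩ S 1) + π (S 2) ≤ 1 := by
    calc π (S 0 ∩ S 1) + π (S 2) ≤ π (S 2)ᶜ + π (S 2) :=
          add_le_add_left (measure_mono hsub) _
      _ = 1 := by rw [add_comm, measure_add_measure_compl (hmeas 2), measure_univ]
  have hsum : π (S 0) + π (S 1) + π (S 2) ≤ 2 := by
    rw [h01, add_assoc]
    calc π (S 0 ∪ S 1) + (π (S 0 ∩ S 1) + π (S 2)) ≤ 1 + 1 :=
          add_le_add prob_le_one hcompl
      _ = 2 := by norm_num
  have hp : π (S 0) * 3 ≤ 2 := by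
    have h1 : π (S 1) = π (S 0) := (heq 0).symm
    have h2' : π (S 2) = π (S 1) := (heq 1).symm
    have h2 : π (S 2) = π (S 0) := h2'.trans h1
    calc π (S 0) * 3 = π (S 0) + π (S 1) + π (S 2) := by rw [h1, h2]; ring
      _ ≤ 2 := hsum
  have hgoal : {x : Fin 3 → ℝ | 2 * x 0 < x 1 + x 2} = S 0 := rfl
  rw [hgoal, ENNReal.le_div_iff_mul_le (by norm_num) (by norm_num)]
  exact hp
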